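/- Let p ≡ 1 (mod 6) be a prime and a ∈ F_p*. Then a is a quadratic non-residue modulo p if and only if N_{p,a} ≡ 4 (mod 6), where N_{p,a} is the number of projective points on y² = x³ + a³ over F_p. -/

import Mathlib

lemma orbit2_dvd {α : Type*} [DecidableEq α] (f : α → α) (s : Finset α) :
    (∀ x ∈ s, f x ∈ s) → (∀ x ∈ s, f (f x) = x) → (∀ x ∈ s, f x ≠ x) → 2 ∣ s.card := by
  induction s using Finset.strongInduction with
  | _ s ih =>
    intro hmem h2 hne
    rcases s.eq_empty_or_nonempty with rfl | ⟨x, hx⟩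
    · simp
    · have h1 : f x ∈ s := hmem x hx
      set o : Finset α := {x, f x} with ho
      have hxo : x ∈ o := by simp [ho]
      have hos : o ⊆ s := by
        intro y hy; simp [ho] at hy; rcases hy with rfl | rfl <;> assumption
      have hcardo : o.card = 2 := by
        rw [Finset.card_insert_of_notMem (by simp [Ne.symm (hne x hx)]),
          Finset.card_singleton]
      set t := s \ o with ht
      have hts : t ⊂ s := Finset.sdiff_ssubset hos ⟨x, hxo⟩
      have hmemt : ∀ y ∈ t, f y ∈ t := by
        intro y hy
        rw [ht, Finset.mem_sdiff] at hy ⊢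
        obtain ⟨hys, hyo⟩ := hy
        refine ⟨hmem y hys, ?_⟩
        simp only [ho, Finset.mem_insert, Finset.mem_singleton] at hyo ⊢
        push_neg at hyo ⊢
        constructor
        · intro h; apply hyo.2; rw [← h2 y hys, h]
        · intro h; apply hyo.1; rw [← h2 y hys, h, h2 x hx]
      have hdvd : 2 ∣ t.card :=
        ih t hts hmemt (fun y hy => h2 y (Finset.mem_sdiff.mp hy).1)
          (fun y hy => hne y (Finset.mem_sdiff.mp hy).1)
      have hc : s.card = t.card + 2 := by
        rw [ht, Finset.card_sdiff_of_subset hos, hcardo]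
        have := Finset.card_le_card hos
        omega
      omega

lemma orbit3_dvd {α : Type*} [DecidableEq α] (f : α → α) (s : Finset α) :
    (∀ x ∈ s, f x ∈ s) → (∀ x ∈ s, f (f (f x)) = x) → (∀ x ∈ s, f x ≠ x) → 3 ∣ s.card := by
  induction s using Finset.strongInduction with
  | _ s ih =>
    intro hmem h3 hne
    rcases s.eq_empty_or_nonempty with rfl | ⟨x, hx⟩
    · simp
    · have h1 : f x ∈ s := hmem x hx
      have h2 : f (f x) ∈ s := hmem _ h1
      have d1 : f x ≠ x := hne x hx
      have d2 : f (f x) ≠ f x := hne _ h1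
      have d3 : f (f x) ≠ x := by
        intro h; exact d1 ((congrArg f h).symm.trans (h3 x hx))
      set o : Finset α := {x, f x, f (f x)} with ho
      have hxo : x ∈ o := by simp [ho]
      have hos : o ⊆ s := by
        intro y hy; simp [ho] at hy; rcases hy with rfl | rfl | rfl <;> assumption
      have hcardo : o.card = 3 := by
        rw [Finset.card_insert_of_notMem (by simp [Ne.symm d1, Ne.symm d3]),
          Finset.card_insert_of_notMem (by simp [Ne.symm d2]), Finset.card_singleton]
      set t := s \ o with ht
      have hts : t ⊂ s := Finset.sdiff_ssubset hos ⟨x, hxo⟩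
      have hmemt : ∀ y ∈ t, f y ∈ t := by
        intro y hy
        rw [ht, Finset.mem_sdiff] at hy ⊢
        obtain ⟨hys, hyo⟩ := hy
        refine ⟨hmem y hys, ?_⟩
        simp only [ho, Finset.mem_insert, Finset.mem_singleton] at hyo ⊢
        push_neg at hyo ⊢
        refine ⟨?_, ?_, ?_⟩
        · intro h; apply hyo.2.2; rw [← h3 y hys, h]
        · intro h; apply hyo.1; rw [← h3 y hys, h, h3 x hx]
        · intro h; apply hyo.2.1; rw [← h3 y hys, h]
          exact congrArg f (h3 x hx)
      have hdvd : 3 ∣ t.card :=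
        ih t hts hmemt (fun y hy => h3 y (Finset.mem_sdiff.mp hy).1)
          (fun y hy => hne y (Finset.mem_sdiff.mp hy).1)
      have hc : s.card = t.card + 3 := by
        rw [ht, Finset.card_sdiff_of_subset hos, hcardo]
        have := Finset.card_le_card hos
        omega
      omega

/-- Number of projective points (affine solutions plus the point at infinity)
on the Bachet curve `y² = x³ + a³` over `F_p`. -/
def bachetCount (p : ℕ) [Fact p.Prime] (a : ZMod p) : ℕ :=
  haveI : NeZero p := ⟨(Fact.out : p.Prime).ne_zero⟩
  (Finset.univ.filter (fun P : ZMod p × ZMod p => P.2 ^ 2 = P.1 ^ 3 + a ^ 3)).card + 1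

theorem stmt_12 (p : ℕ) [Fact p.Prime] (hp : p % 6 = 1) (a : ZMod p) (ha : a ≠ 0) :
    ¬ IsSquare a ↔ bachetCount p a % 6 = 4 := by
  haveI : NeZero p := ⟨(Fact.out : p.Prime).ne_zero⟩
  have hpp : p.Prime := Fact.out
  have hp7 : 7 ≤ p := by
    have := hpp.two_le
    rcases Nat.lt_or_ge p 7 with h | h
    · interval_cases p <;> omega
    · exact h
  have h2ne : (2 : ZMod p) ≠ 0 := by
    intro h
    have := (ZMod.natCast_eq_zero_iff 2 p).mp (by exact_mod_cast h)
    have := Nat.le_of_dvd (by norm_num) this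
    omega
  have h3ne : (3 : ZMod p) ≠ 0 := by
    intro h
    have := (ZMod.natCast_eq_zero_iff 3 p).mp (by exact_mod_cast h)
    have := Nat.le_of_dvd (by norm_num) this
    omega
  set S : Finset (ZMod p × ZMod p) :=
    Finset.univ.filter (fun P : ZMod p × ZMod p => P.2 ^ 2 = P.1 ^ 3 + a ^ 3) with hS
  have hmemS : ∀ P : ZMod p × ZMod p, P ∈ S ↔ P.2 ^ 2 = P.1 ^ 3 + a ^ 3 := by
    intro P; simp [hS]
  -- ### parity of S.card
  have hsplit2 : (S.filter (fun P => P.2 = 0)).card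
      + (S.filter (fun P => ¬ P.2 = 0)).card = S.card :=
    Finset.card_filter_add_card_filter_not _
  have hev : 2 ∣ (S.filter (fun P => ¬ P.2 = 0)).card := by
    apply orbit2_dvd (fun P => (P.1, -P.2))
    · intro P hP
      rw [Finset.mem_filter, hmemS] at hP ⊢
      constructor
      · show (-P.2) ^ 2 = P.1 ^ 3 + a ^ 3
        rw [neg_sq]; exact hP.1
      · show ¬(-P.2 = 0)
        simpa using hP.2
    · intro P _; ext <;> simp
    · intro P hP h
      simp only [Finset.mem_filter] at hP
      have : -P.2 = P.2 := congrArg Prod.snd h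
      have h0 : (2 : ZMod p) * P.2 = 0 := by linear_combination - this
      rcases mul_eq_zero.mp h0 with h' | h'
      · exact h2ne h'
      · exact hP.2 h'
  -- points with y = 0 correspond to roots of x³ = -a³
  set T : Finset (ZMod p) := Finset.univ.filter (fun x => x ^ 3 = -a ^ 3) with hT
  have hS0T : (S.filter (fun P => P.2 = 0)).card = T.card := by
    apply Finset.card_nbij' (fun P => P.1) (fun x => (x, 0))
    · intro P hP
      rw [Finset.mem_coe, Finset.mem_filter, hmemS] at hP
      simp only [hT, Finset.mem_coe, Finset.mem_filter, Finset.mem_univ, true_and]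
      obtain ⟨h, hy⟩ := hP
      rw [hy] at h
      linear_combination - h
    · intro x hx
      simp only [hT, Finset.mem_coe, Finset.mem_filter, Finset.mem_univ, true_and] at hx
      rw [Finset.mem_coe, Finset.mem_filter, hmemS]
      refine ⟨?_, rfl⟩
      show (0 : ZMod p) ^ 2 = x ^ 3 + a ^ 3
      linear_combination -hx
    · intro P hP
      simp only [Finset.mem_coe, Finset.mem_filter] at hP
      exact Prod.ext rfl hP.2.symm
    · intro x _; rfl
  set Q : Finset (ZMod p) :=
    Finset.univ.filter (fun x => x ≠ -a ∧ x ^ 3 = -a ^ 3) with hQ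
  have hmemQ : ∀ x : ZMod p, x ∈ Q ↔ x ≠ -a ∧ x ^ 3 = -a ^ 3 := by
    intro x; simp [hQ]
  have hquadQ : ∀ x ∈ Q, x ^ 2 - a * x + a ^ 2 = 0 := by
    intro x hx
    rw [hmemQ] at hx
    obtain ⟨hne, hcube⟩ := hx
    have hfac : (x + a) * (x ^ 2 - a * x + a ^ 2) = 0 := by linear_combination hcube
    rcases mul_eq_zero.mp hfac with h | h
    · exact absurd (by linear_combination h) hne
    · exact h
  have hTQ : T = insert (-a) Q := by
    ext x
    simp only [hT, hQ, Finset.mem_filter, Finset.mem_univ, true_and, Finset.mem_insert]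
    constructor
    · intro h
      by_cases hx : x = -a
      · exact Or.inl hx
      · exact Or.inr ⟨hx, h⟩
    · rintro (rfl | ⟨-, h⟩)
      · ring
      · exact h
  have hTcard : T.card = Q.card + 1 := by
    rw [hTQ, Finset.card_insert_of_notMem (by simp [hQ])]
  have hQev : 2 ∣ Q.card := by
    apply orbit2_dvd (fun x => a - x)
    · intro x hx
      have hquad := hquadQ x hx
      rw [hmemQ] at hx ⊢
      refine ⟨?_, by linear_combination (2 * a - x) * hquad⟩
      intro h
      have hx2 : x = 2 * a := by linear_combination - h
      rw [hx2] at hquad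
      have h3a : (3 : ZMod p) * a ^ 2 = 0 := by linear_combination hquad
      rcases mul_eq_zero.mp h3a with h' | h'
      · exact h3ne h'
      · exact ha (pow_eq_zero_iff (by norm_num)|>.mp h')
    · intro x _; ring
    · intro x hx h
      have hquad := hquadQ x hx
      have h2x : a = 2 * x := by linear_combination h
      rw [h2x] at hquad
      have h3x : (3 : ZMod p) * x ^ 2 = 0 := by linear_combination hquad
      rcases mul_eq_zero.mp h3x with h' | h'
      · exact h3ne h'
      · have : x = 0 := pow_eq_zero_iff (by norm_num) |>.mp h'
        rw [this] at h2x
        exact ha (by rw [h2x]; ring)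
  have hScard2 : S.card % 2 = 1 := by
    obtain ⟨k, hk⟩ := hev
    obtain ⟨m, hm⟩ := hQev
    omega
  -- ### S.card mod 3
  haveI : Fact (Nat.Prime 3) := ⟨by norm_num⟩
  obtain ⟨u, hu⟩ := exists_prime_orderOf_dvd_card (G := (ZMod p)ˣ) 3
    (by rw [ZMod.card_units]; omega)
  set ζ : ZMod p := (u : ZMod p) with hζ
  have hζ3 : ζ ^ 3 = 1 := by
    have h := pow_orderOf_eq_one u
    rw [hu] at h
    rw [hζ, ← Units.val_pow_eq_pow_val, h, Units.val_one]
  have hζ1 : ζ ≠ 1 := by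
    intro h
    have : u = 1 := Units.ext h
    rw [this] at hu
    simp at hu
  have hζ0 : ζ ≠ 0 := u.ne_zero
  have hsplit3 : (S.filter (fun P => P.1 = 0)).card
      + (S.filter (fun P => ¬ P.1 = 0)).card = S.card :=
    Finset.card_filter_add_card_filter_not _
  have h3dvd : 3 ∣ (S.filter (fun P => ¬ P.1 = 0)).card := by
    apply orbit3_dvd (fun P => (ζ * P.1, P.2))
    · intro P hP
      rw [Finset.mem_filter, hmemS] at hP ⊢
      obtain ⟨h, hne⟩ := hP
      refine ⟨?_, mul_ne_zero hζ0 hne⟩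
      show P.2 ^ 2 = (ζ * P.1) ^ 3 + a ^ 3
      linear_combination h - P.1 ^ 3 * hζ3
    · intro P _
      refine Prod.ext ?_ rfl
      show ζ * (ζ * (ζ * P.1)) = P.1
      linear_combination P.1 * hζ3
    · intro P hP h
      simp only [Finset.mem_filter] at hP
      have h1 : ζ * P.1 = P.1 := congrArg Prod.fst h
      have : (ζ - 1) * P.1 = 0 := by linear_combination h1
      rcases mul_eq_zero.mp this with h' | h'
      · exact hζ1 (by linear_combination h')
      · exact hP.2 h'
  set Y : Finset (ZMod p) := Finset.univ.filter (fun y => y ^ 2 = a ^ 3) with hY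
  have hS2Y : (S.filter (fun P => P.1 = 0)).card = Y.card := by
    apply Finset.card_nbij' (fun P => P.2) (fun y => ((0 : ZMod p), y))
    · intro P hP
      rw [Finset.mem_coe, Finset.mem_filter, hmemS] at hP
      simp only [hY, Finset.mem_coe, Finset.mem_filter, Finset.mem_univ, true_and]
      obtain ⟨h, hx⟩ := hP
      rw [hx] at h
      linear_combination h
    · intro y hy
      simp only [hY, Finset.mem_coe, Finset.mem_filter, Finset.mem_univ, true_and] at hy
      rw [Finset.mem_coe, Finset.mem_filter, hmemS]
      refine ⟨?_, rfl⟩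
      show y ^ 2 = (0 : ZMod p) ^ 3 + a ^ 3
      linear_combination hy
    · intro P hP
      simp only [Finset.mem_coe, Finset.mem_filter] at hP
      exact Prod.ext hP.2.symm rfl
    · intro y _; rfl
  have hYcard : Y.card = if IsSquare a then 2 else 0 := by
    by_cases hsq : IsSquare a
    · obtain ⟨r, hr⟩ := hsq
      have hr0 : r ≠ 0 := by
        intro h; apply ha; rw [hr, h]; ring
      have hYeq : Y = {r ^ 3, -(r ^ 3)} := by
        ext y
        simp only [hY, Finset.mem_filter, Finset.mem_univ, true_and,
          Finset.mem_insert, Finset.mem_singleton]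
        constructor
        · intro h
          have h0 : (y - r ^ 3) * (y + r ^ 3) = 0 := by
            rw [hr] at h; linear_combination h
          rcases mul_eq_zero.mp h0 with h' | h'
          · exact Or.inl (by linear_combination h')
          · exact Or.inr (by linear_combination h')
        · rintro (rfl | rfl) <;> rw [hr] <;> ring
      rw [hYeq, if_pos ⟨r, hr⟩]
      rw [Finset.card_insert_of_notMem, Finset.card_singleton]
      simp only [Finset.mem_singleton]
      intro h
      have h0 : (2 : ZMod p) * r ^ 3 = 0 := by linear_combination h
      rcases mul_eq_zero.mp h0 with h' | h'
      · exact h2ne h'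
      · exact hr0 (pow_eq_zero_iff (by norm_num) |>.mp h')
    · rw [if_neg hsq]
      rw [Finset.card_eq_zero]
      rw [Finset.eq_empty_iff_forall_notMem]
      intro y hy
      simp only [hY, Finset.mem_filter, Finset.mem_univ, true_and] at hy
      apply hsq
      refine ⟨y * a⁻¹, ?_⟩
      have hainv : a * a⁻¹ = 1 := ZMod.mul_inv_of_unit a (Ne.isUnit ha)
      have e1 : (y * a⁻¹) * (y * a⁻¹) = y ^ 2 * a⁻¹ ^ 2 := by ring
      rw [e1, hy]
      have e2 : a ^ 3 * a⁻¹ ^ 2 = a * (a * a⁻¹) * (a * a⁻¹) := by ring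
      rw [e2, hainv]
      ring
  -- ### conclusion
  have hb : bachetCount p a = S.card + 1 := rfl
  rw [hb]
  by_cases hsq : IsSquare a
  · rw [hYcard, if_pos hsq] at hS2Y
    obtain ⟨k, hk⟩ := h3dvd
    simp only [hsq, not_true_eq_false, false_iff]
    omega
  · rw [hYcard, if_neg hsq] at hS2Y
    obtain ⟨k, hk⟩ := h3dvd
    simp only [hsq, not_false_eq_true, true_iff]
    omega
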